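/- If W : 2^[n] → ℝ is monotone and submodular, then its multilinear extension f̄(x) = Σ_{S ⊆ [n]} W(S) ∏_{i ∈ S} xᵢ ∏_{j ∉ S} (1 - xⱼ) is monotone and DR-submodular on [0,1]ⁿ: for all i, j and all x ∈ (0,1)ⁿ, ∂²f̄/∂xᵢ∂xⱼ(x) ≤ 0, and ∂f̄/∂xᵢ(x) ≥ 0. -/

import Mathlib

open Finset

/-- the affine factor: `x k` if `k ∈ S`, else `1 - x k`. -/
private def mlg {n : ℕ} (S : Finset (Fin n)) (k : Fin n) (t : ℝ) : ℝ :=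
  if k ∈ S then t else 1 - t

/-- the sign of the derivative of `mlg`. -/
private def mlsgn {n : ℕ} (S : Finset (Fin n)) (k : Fin n) : ℝ :=
  if k ∈ S then 1 else -1

private lemma mlg_hasFDerivAt {n : ℕ} (S : Finset (Fin n)) (k : Fin n) (x : Fin n → ℝ) :
    HasFDerivAt (fun y : Fin n → ℝ => mlg S k (y k))
      (mlsgn S k • (ContinuousLinearMap.proj k : (Fin n → ℝ) →L[ℝ] ℝ)) x := by
  by_cases h : k ∈ S
  · simpa [mlg, mlsgn, h] using
      (hasFDerivAt_apply (𝕜 := ℝ) k x)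
  · have h2 : (mlsgn S k • (ContinuousLinearMap.proj k : (Fin n → ℝ) →L[ℝ] ℝ))
        = -(ContinuousLinearMap.proj k) := by
      unfold mlsgn
      rw [if_neg h]
      ext y
      simp
    rw [h2]
    have := (hasFDerivAt_const (1 : ℝ) x).sub
      (hasFDerivAt_apply (𝕜 := ℝ) k x)
    rw [zero_sub] at this; simp only [mlg, h, if_false]; exact this

private lemma mlg_prod_hasFDerivAt {n : ℕ} (S A : Finset (Fin n)) (x : Fin n → ℝ) :
    HasFDerivAt (fun y : Fin n → ℝ => ∏ k ∈ A, mlg S k (y k))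
      (∑ k ∈ A, (∏ l ∈ A.erase k, mlg S l (x l)) •
        (mlsgn S k • (ContinuousLinearMap.proj k : (Fin n → ℝ) →L[ℝ] ℝ))) x :=
  HasFDerivAt.finset_prod fun k _ => mlg_hasFDerivAt S k x

private lemma ml_apply_single {n : ℕ} (S A : Finset (Fin n)) (c : Fin n → ℝ) (j : Fin n) :
    (∑ k ∈ A, c k •
        (mlsgn S k • (ContinuousLinearMap.proj k : (Fin n → ℝ) →L[ℝ] ℝ)))
      (Pi.single j 1) = if j ∈ A then c j * mlsgn S j else 0 := by
  rw [ContinuousLinearMap.sum_apply, ← Finset.sum_ite_eq' A j (fun k => c k * mlsgn S k)]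
  refine Finset.sum_congr rfl fun k _ => ?_
  simp only [ContinuousLinearMap.smul_apply, ContinuousLinearMap.proj_apply,
    smul_eq_mul, Pi.single_apply]
  split <;> simp

/-- The multilinear extension of a monotone submodular set function is monotone
and DR-submodular: on `(0,1)ⁿ` all second partials are nonpositive and all first
partials are nonnegative. -/
theorem multilinear_extension_monotone_drSubmodular
    {n : ℕ} (W : Finset (Fin n) → ℝ)
    (hmono : ∀ A B : Finset (Fin n), A ⊆ B → W A ≤ W B)
    (hsub : ∀ A B : Finset (Fin n), W (A ∪ B) + W (A ∩ B) ≤ W A + W B)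
    (fbar : (Fin n → ℝ) → ℝ)
    (hfbar : fbar = fun x => ∑ S ∈ (Finset.univ : Finset (Fin n)).powerset,
      W S * (∏ i ∈ S, x i) * ∏ j ∈ Sᶜ, (1 - x j)) :
    ∀ x : Fin n → ℝ, (∀ i, x i ∈ Set.Ioo (0:ℝ) 1) → ∀ i j : Fin n,
      fderiv ℝ (fun y => fderiv ℝ fbar y (Pi.single j 1)) x (Pi.single i 1) ≤ 0 ∧
      0 ≤ fderiv ℝ fbar x (Pi.single i 1) := by
  -- rewrite fbar in terms of mlg
  have hfb : fbar = fun y => ∑ S ∈ (Finset.univ : Finset (Fin n)).powerset,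
      W S * ∏ k ∈ Finset.univ, mlg S k (y k) := by
    rw [hfbar]; funext y
    refine Finset.sum_congr rfl fun S _ => ?_
    have h1 : (∏ k ∈ S, mlg S k (y k)) = ∏ i ∈ S, y i :=
      Finset.prod_congr rfl fun k hk => by simp [mlg, hk]
    have h2 : (∏ k ∈ Sᶜ, mlg S k (y k)) = ∏ j ∈ Sᶜ, (1 - y j) :=
      Finset.prod_congr rfl fun k hk => by
        simp [mlg, (Finset.mem_compl.mp hk)]
    rw [mul_assoc, ← h1, ← h2, Finset.prod_mul_prod_compl]
  -- derivative of fbar everywhere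
  have hD1 : ∀ y : Fin n → ℝ, HasFDerivAt fbar
      (∑ S ∈ (Finset.univ : Finset (Fin n)).powerset, W S •
        (∑ k ∈ (Finset.univ : Finset (Fin n)),
          (∏ l ∈ Finset.univ.erase k, mlg S l (y l)) •
          (mlsgn S k • (ContinuousLinearMap.proj k : (Fin n → ℝ) →L[ℝ] ℝ)))) y := by
    intro y
    rw [hfb]
    exact HasFDerivAt.fun_sum fun S _ => (mlg_prod_hasFDerivAt S Finset.univ y).const_mul (W S)
  have hD1val : ∀ (y : Fin n → ℝ) (j : Fin n), fderiv ℝ fbar y (Pi.single j 1)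
      = ∑ S ∈ (Finset.univ : Finset (Fin n)).powerset,
        (W S * mlsgn S j) * ∏ l ∈ Finset.univ.erase j, mlg S l (y l) := by
    intro y j
    rw [(hD1 y).fderiv, ContinuousLinearMap.sum_apply]
    refine Finset.sum_congr rfl fun S _ => ?_
    rw [ContinuousLinearMap.smul_apply, ml_apply_single, if_pos (Finset.mem_univ j)]
    simp [smul_eq_mul]; ring
  intro x hx i j
  -- positivity of the factors
  have hgpos : ∀ (S : Finset (Fin n)) (l : Fin n), 0 ≤ mlg S l (x l) := by
    intro S l
    rcases hx l with ⟨h0, h1⟩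
    unfold mlg; split
    · linarith
    · linarith
  have hProd : ∀ (S A : Finset (Fin n)), 0 ≤ ∏ l ∈ A, mlg S l (x l) :=
    fun S A => Finset.prod_nonneg fun l _ => hgpos S l
  constructor
  · -- second derivative nonpositive
    have hfun : (fun y => fderiv ℝ fbar y (Pi.single j 1))
        = fun y => ∑ S ∈ (Finset.univ : Finset (Fin n)).powerset,
          (W S * mlsgn S j) * ∏ l ∈ Finset.univ.erase j, mlg S l (y l) :=
      funext fun y => hD1val y j
    have hD2 : HasFDerivAt (fun y => fderiv ℝ fbar y (Pi.single j 1))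
        (∑ S ∈ (Finset.univ : Finset (Fin n)).powerset, (W S * mlsgn S j) •
          (∑ k ∈ Finset.univ.erase j,
            (∏ l ∈ (Finset.univ.erase j).erase k, mlg S l (x l)) •
            (mlsgn S k • (ContinuousLinearMap.proj k : (Fin n → ℝ) →L[ℝ] ℝ)))) x := by
      rw [hfun]
      exact HasFDerivAt.fun_sum fun S _ =>
        (mlg_prod_hasFDerivAt S (Finset.univ.erase j) x).const_mul (W S * mlsgn S j)
    rw [hD2.fderiv, ContinuousLinearMap.sum_apply]
    by_cases hij : i = j
    · subst hij
      apply le_of_eq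
      refine Finset.sum_eq_zero fun S _ => ?_
      rw [ContinuousLinearMap.smul_apply, ml_apply_single,
        if_neg (Finset.notMem_erase i Finset.univ)]
      simp
    · have hmem : i ∈ Finset.univ.erase j := Finset.mem_erase.mpr ⟨hij, Finset.mem_univ i⟩
      have hval : ∀ S ∈ (Finset.univ : Finset (Fin n)).powerset,
          ((W S * mlsgn S j) •
            (∑ k ∈ Finset.univ.erase j,
              (∏ l ∈ (Finset.univ.erase j).erase k, mlg S l (x l)) •
              (mlsgn S k • (ContinuousLinearMap.proj k : (Fin n → ℝ) →L[ℝ] ℝ))))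
            (Pi.single i 1)
          = (W S * mlsgn S j * mlsgn S i) *
            ∏ l ∈ (Finset.univ.erase j).erase i, mlg S l (x l) := by
        intro S _
        rw [ContinuousLinearMap.smul_apply, ml_apply_single, if_pos hmem]
        simp [smul_eq_mul]; ring
      rw [Finset.sum_congr rfl hval]
      -- group the sum over the powerset
      set U : Finset (Fin n) := (Finset.univ.erase j).erase i with hU
      have hiU : i ∉ U := Finset.notMem_erase i _
      have hjU : j ∉ insert i U := by
        simp only [Finset.mem_insert, hU]
        push_neg
        exact ⟨fun h => hij h.symm, fun h => (Finset.notMem_erase j _)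
          (Finset.mem_of_mem_erase h)⟩
      have huniv : (Finset.univ : Finset (Fin n)) = insert j (insert i U) := by
        rw [hU, Finset.insert_erase hmem, Finset.insert_erase (Finset.mem_univ j)]
      rw [huniv, Finset.sum_powerset_insert hjU, Finset.sum_powerset_insert hiU,
        Finset.sum_powerset_insert hiU, ← Finset.sum_add_distrib, ← Finset.sum_add_distrib,
        ← Finset.sum_add_distrib]
      apply Finset.sum_nonpos
      intro T hT
      have hT' : T ⊆ U := Finset.mem_powerset.mp hT
      have hiT : i ∉ T := fun h => hiU (hT' h)
      have hjT : j ∉ T := fun h => (Finset.notMem_erase j _)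
          (Finset.mem_of_mem_erase (hT' h))
      -- the product is the same for all four sets
      have hprodeq : ∀ S : Finset (Fin n), (∀ l ∈ U, (l ∈ S ↔ l ∈ T)) →
          (∏ l ∈ U, mlg S l (x l)) = ∏ l ∈ U, mlg T l (x l) := by
        intro S hS
        refine Finset.prod_congr rfl fun l hl => ?_
        unfold mlg
        rw [if_congr (hS l hl) rfl rfl]
      have e1 : (∏ l ∈ U, mlg (insert i T) l (x l)) = ∏ l ∈ U, mlg T l (x l) :=
        hprodeq _ fun l hl => by
          have : l ≠ i := fun h => hiU (h ▸ hl)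
          simp [Finset.mem_insert, this]
      have e2 : (∏ l ∈ U, mlg (insert j T) l (x l)) = ∏ l ∈ U, mlg T l (x l) :=
        hprodeq _ fun l hl => by
          have : l ≠ j := fun h => hjU (h ▸ Finset.mem_insert_of_mem hl)
          simp [Finset.mem_insert, this]
      have e3 : (∏ l ∈ U, mlg (insert j (insert i T)) l (x l)) = ∏ l ∈ U, mlg T l (x l) :=
        hprodeq _ fun l hl => by
          have h1 : l ≠ j := fun h => hjU (h ▸ Finset.mem_insert_of_mem hl)
          have h2 : l ≠ i := fun h => hiU (h ▸ hl)
          simp [Finset.mem_insert, h1, h2]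
      -- signs
      have hiTj : i ∉ insert j T := by
        simp [Finset.mem_insert, hij, hiT]
      have hjTi : j ∉ insert i T := by
        intro hmem'
        rcases Finset.mem_insert.mp hmem' with h | h
        · exact hij h.symm
        · exact hjT h
      have s1 : mlsgn T j = -1 := by simp [mlsgn, hjT]
      have s2 : mlsgn T i = -1 := by simp [mlsgn, hiT]
      have s3 : mlsgn (insert i T) i = 1 := by simp [mlsgn]
      have s4 : mlsgn (insert i T) j = -1 := by simp [mlsgn, hjTi]
      have s5 : mlsgn (insert j T) j = 1 := by simp [mlsgn]
      have s6 : mlsgn (insert j T) i = -1 := by simp [mlsgn, hiTj]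
      have s7 : mlsgn (insert j (insert i T)) j = 1 := by simp [mlsgn]
      have s8 : mlsgn (insert j (insert i T)) i = 1 := by
        simp [mlsgn, Finset.mem_insert]
      -- submodularity
      have hsubm : W (insert j (insert i T)) + W T ≤ W (insert i T) + W (insert j T) := by
        have hun : insert i T ∪ insert j T = insert j (insert i T) := by
          ext a; simp only [Finset.mem_union, Finset.mem_insert]; tauto
        have hin : insert i T ∩ insert j T = T := by
          ext a
          simp only [Finset.mem_inter, Finset.mem_insert]
          constructor
          · rintro ⟨h1 | h1, h2 | h2⟩
            · exact absurd (h1 ▸ h2) hij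
            · exact h2
            · exact h1
            · exact h1
          · intro h; exact ⟨Or.inr h, Or.inr h⟩
        have := hsub (insert i T) (insert j T)
        rw [hun, hin] at this
        linarith
      rw [e1, e2, e3, s1, s2, s3, s4, s5, s6, s7, s8]
      have hP := hProd T U
      nlinarith [hP, hsubm]
  · -- first derivative nonnegative
    rw [hD1val x i]
    have hmem : i ∈ (Finset.univ : Finset (Fin n)) := Finset.mem_univ i
    have huniv : (Finset.univ : Finset (Fin n)) = insert i (Finset.univ.erase i) := by
      rw [Finset.insert_erase hmem]
    rw [huniv, Finset.sum_powerset_insert (Finset.notMem_erase i _), ← Finset.sum_add_distrib]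
    refine Finset.sum_nonneg fun T hT => ?_
    have hT' : T ⊆ Finset.univ.erase i := Finset.mem_powerset.mp hT
    have hiT : i ∉ T := fun h => (Finset.notMem_erase i _) (hT' h)
    have s1 : mlsgn T i = -1 := by simp [mlsgn, hiT]
    have s2 : mlsgn (insert i T) i = 1 := by simp [mlsgn]
    have e1 : (∏ l ∈ (insert i (Finset.univ.erase i)).erase i, mlg (insert i T) l (x l))
        = ∏ l ∈ (insert i (Finset.univ.erase i)).erase i, mlg T l (x l) := by
      refine Finset.prod_congr rfl fun l hl => ?_
      have hli : l ≠ i := (Finset.mem_erase.mp hl).1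
      simp [mlg, Finset.mem_insert, hli]
    rw [e1, s1, s2]
    have hW : W T ≤ W (insert i T) := hmono T (insert i T) (Finset.subset_insert i T)
    have hP := hProd T ((insert i (Finset.univ.erase i)).erase i)
    nlinarith [hP, hW]
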